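/- Let K ≥ 1 and N > 4. Suppose v : [0,N]×[0,1] → ℝ has the form v(x,y) = v₂(x)sin(2πy) + B(x,y) where v₂ is differentiable with |v₂(x) − sin(2πx/N)| ≤ Kη/N and |v₂'(x)| ≤ K/N for all x ∈ [0,N], and B is differentiable with |B(x,y)| + |∂ₓB(x,y)| + |∂ᵧB(x,y)| ≤ Kη/N for all (x,y). Then there exist η₀ > 0, c > 0, and C depending only on K such that for all 0 < η < η₀ the following holds at every zero (x₀,y₀) of v with x₀ ∈ [1, N−1], |x₀ − N/2| ≥ √η, and |y₀ − 1/2| ≤ 1/8: |∂ᵧv(x₀,y₀)| ≥ c·|sin(2πx₀/N)| > 0, and |∂ₓv(x₀,y₀)|/|∂ᵧv(x₀,y₀)| ≤ C·η/(N·|sin(2πx₀/N)|) + C·η/(N²·sin²(2πx₀/N)). -/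

import Mathlib

open Real

private lemma jordan17 (θ : ℝ) (h0 : 0 ≤ θ) (h1 : θ ≤ π) :
    2 / π * min θ (π - θ) ≤ Real.sin θ := by
  have hπ := Real.pi_pos
  rcases le_total θ (π / 2) with h | h
  · calc 2 / π * min θ (π - θ) ≤ 2 / π * θ :=
          mul_le_mul_of_nonneg_left (min_le_left _ _) (by positivity)
      _ ≤ Real.sin θ := Real.mul_le_sin h0 h
  · rw [← Real.sin_pi_sub θ]
    calc 2 / π * min θ (π - θ) ≤ 2 / π * (π - θ) :=
          mul_le_mul_of_nonneg_left (min_le_right _ _) (by positivity)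
      _ ≤ Real.sin (π - θ) := Real.mul_le_sin (by linarith) (by linarith)

private lemma sin_half17 (N x d : ℝ) (hN : 0 < N) (hd : 0 ≤ d) (hdx : d ≤ x)
    (hgap : d ≤ N / 2 - x) : 4 * d / N ≤ Real.sin (2 * π * x / N) := by
  have hπ := Real.pi_pos
  have hx0 : 0 ≤ x := hd.trans hdx
  have h0 : 0 ≤ 2 * π * x / N := by positivity
  have hθπ : 2 * π * x / N ≤ π := by
    rw [div_le_iff₀ hN]; nlinarith
  have hmin : 2 * π * d / N ≤ min (2 * π * x / N) (π - 2 * π * x / N) := by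
    refine le_min ?_ ?_
    · gcongr
    · rw [le_sub_iff_add_le, ← add_div, div_le_iff₀ hN]
      nlinarith
  have hjordan := jordan17 (2 * π * x / N) h0 hθπ
  have key : 2 / π * (2 * π * d / N) ≤ 2 / π * min (2 * π * x / N) (π - 2 * π * x / N) :=
    mul_le_mul_of_nonneg_left hmin (by positivity)
  have heq : 2 / π * (2 * π * d / N) = 4 * d / N := by
    field_simp
    ring
  linarith [heq ▸ key]

private lemma sinLB17 (N x d : ℝ) (hN : 0 < N) (hd : 0 ≤ d) (hdx : d ≤ x)
    (hxN : x ≤ N - d) (hgap : d ≤ |x - N / 2|) :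
    4 * d / N ≤ |Real.sin (2 * π * x / N)| := by
  rcases le_total x (N / 2) with h | h
  · have hgap' : d ≤ N / 2 - x := by
      rw [abs_of_nonpos (by linarith)] at hgap
      linarith
    exact le_trans (sin_half17 N x d hN hd hdx hgap') (le_abs_self _)
  · have hgap' : d ≤ N / 2 - (N - x) := by
      rw [abs_of_nonneg (by linarith)] at hgap
      linarith
    have h1 := sin_half17 N (N - x) d hN hd (by linarith) hgap'
    have heq : 2 * π * (N - x) / N = 2 * π - 2 * π * x / N := by
      field_simp
    rw [heq, Real.sin_two_pi_sub] at h1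
    linarith [neg_le_abs (Real.sin (2 * π * x / N))]

set_option maxHeartbeats 1200000 in
/-- Quantitative content of Proposition 3.2: at every zero `(x₀,y₀)` of
`v = v₂(x)sin(2πy) + B(x,y)` away from the central opening, the
`y`-partial derivative `2π v₂(x₀)cos(2πy₀) + ∂ᵧB(x₀,y₀)` is bounded below by
`c|sin(2πx₀/N)| > 0`, and the ratio of the `x`-partial derivative
`v₂'(x₀)sin(2πy₀) + ∂ₓB(x₀,y₀)` to it obeys the stated slope bound. -/
theorem stmt17 (K : ℝ) (hK : 1 ≤ K) :
    ∃ η₀ c C : ℝ, 0 < η₀ ∧ 0 < c ∧ 0 < C ∧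
      ∀ (N η : ℝ) (v₂ v₂' : ℝ → ℝ) (B Bx By : ℝ → ℝ → ℝ),
        4 < N → 0 < η → η < η₀ →
        (∀ x ∈ Set.Icc (0:ℝ) N, HasDerivAt v₂ (v₂' x) x) →
        (∀ x ∈ Set.Icc (0:ℝ) N, |v₂ x - Real.sin (2 * π * x / N)| ≤ K * η / N) →
        (∀ x ∈ Set.Icc (0:ℝ) N, |v₂' x| ≤ K / N) →
        (∀ x ∈ Set.Icc (0:ℝ) N, ∀ y ∈ Set.Icc (0:ℝ) 1,
          HasDerivAt (fun t => B t y) (Bx x y) x ∧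
          HasDerivAt (fun t => B x t) (By x y) y) →
        (∀ x ∈ Set.Icc (0:ℝ) N, ∀ y ∈ Set.Icc (0:ℝ) 1,
          |B x y| + |Bx x y| + |By x y| ≤ K * η / N) →
        ∀ x₀ ∈ Set.Icc (1:ℝ) (N - 1), ∀ y₀ ∈ Set.Icc (0:ℝ) 1,
          Real.sqrt η ≤ |x₀ - N / 2| → |y₀ - 1 / 2| ≤ 1 / 8 →
          v₂ x₀ * Real.sin (2 * π * y₀) + B x₀ y₀ = 0 →
          0 < c * |Real.sin (2 * π * x₀ / N)| ∧
          c * |Real.sin (2 * π * x₀ / N)|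
            ≤ |2 * π * v₂ x₀ * Real.cos (2 * π * y₀) + By x₀ y₀| ∧
          |v₂' x₀ * Real.sin (2 * π * y₀) + Bx x₀ y₀|
              / |2 * π * v₂ x₀ * Real.cos (2 * π * y₀) + By x₀ y₀|
            ≤ C * η / (N * |Real.sin (2 * π * x₀ / N)|)
              + C * η / (N ^ 2 * Real.sin (2 * π * x₀ / N) ^ 2) := by
  have hK0 : (0:ℝ) < K := by linarith
  refine ⟨1 / K ^ 2, 1, 2 * K ^ 2, by positivity, one_pos, by positivity, ?_⟩
  intro N η v₂ v₂' B Bx By hN hη hη2 _hder hv2bd hv2'bd _hBder hBbd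
    x₀ hx₀ y₀ hy₀ hgap hy₀c hzero
  have hπ := Real.pi_pos
  have hN0 : (0:ℝ) < N := by linarith
  -- basic facts about η
  have hsqpos : 0 < Real.sqrt η := Real.sqrt_pos.mpr hη
  have hη1 : η ≤ 1 := by
    have : 1 / K ^ 2 ≤ 1 := by
      rw [div_le_one (by positivity)]
      nlinarith
    linarith
  have hsq1 : Real.sqrt η ≤ 1 := Real.sqrt_le_one.mpr hη1
  have hKsq : K * Real.sqrt η ≤ 1 := by
    have h1 : Real.sqrt η < Real.sqrt (1 / K ^ 2) := Real.sqrt_lt_sqrt hη.le hη2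
    have h2 : Real.sqrt (1 / K ^ 2) = 1 / K := by
      rw [show (1:ℝ) / K ^ 2 = (1 / K) ^ 2 by ring, Real.sqrt_sq (by positivity)]
    rw [h2, lt_div_iff₀ hK0] at h1
    nlinarith
  have hηsq : Real.sqrt η * Real.sqrt η = η := Real.mul_self_sqrt hη.le
  -- membership
  have hx₀m : x₀ ∈ Set.Icc (0:ℝ) N := ⟨by linarith [hx₀.1], by linarith [hx₀.2]⟩
  -- lower bound on s = |sin(2πx₀/N)|
  set s := |Real.sin (2 * π * x₀ / N)| with hs_def
  have hs : 4 * Real.sqrt η / N ≤ s :=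
    sinLB17 N x₀ (Real.sqrt η) hN0 hsqpos.le (by linarith [hx₀.1])
      (by linarith [hx₀.2]) hgap
  have hsp : 0 < s := lt_of_lt_of_le (by positivity) hs
  -- K η / N ≤ s / 4
  have hKηs : K * η / N ≤ s / 4 := by
    have h4 : 4 * Real.sqrt η ≤ s * N := by
      rw [div_le_iff₀ hN0] at hs; linarith
    have h5 : K * η ≤ Real.sqrt η := by
      nlinarith [mul_le_mul_of_nonneg_right hKsq hsqpos.le, hηsq]
    rw [div_le_div_iff₀ hN0 (by norm_num : (0:ℝ) < 4)]
    nlinarith [h4, h5]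
  -- bounds on B and its derivatives
  have hB := hBbd x₀ hx₀m y₀ hy₀
  have hB1 : |B x₀ y₀| ≤ K * η / N := by
    have := abs_nonneg (Bx x₀ y₀); have := abs_nonneg (By x₀ y₀); linarith
  have hB2 : |Bx x₀ y₀| ≤ K * η / N := by
    have := abs_nonneg (B x₀ y₀); have := abs_nonneg (By x₀ y₀); linarith
  have hB3 : |By x₀ y₀| ≤ K * η / N := by
    have := abs_nonneg (B x₀ y₀); have := abs_nonneg (Bx x₀ y₀); linarith
  -- |v₂ x₀| ≥ 3s/4
  have hv2c := hv2bd x₀ hx₀m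
  have hv2 : 3 / 4 * s ≤ |v₂ x₀| := by
    have h1 : |Real.sin (2 * π * x₀ / N)| - |v₂ x₀|
        ≤ |Real.sin (2 * π * x₀ / N) - v₂ x₀| := abs_sub_abs_le_abs_sub _ _
    rw [abs_sub_comm] at h1
    have := hv2c
    rw [← hs_def] at h1
    linarith
  -- cos lower bound
  have hcos : 1 / 2 ≤ |Real.cos (2 * π * y₀)| := by
    have heq : 2 * π * y₀ = 2 * π * (y₀ - 1 / 2) + π := by ring
    rw [heq, Real.cos_add_pi, abs_neg]
    have h1 := Real.one_sub_sq_div_two_le_cos (x := 2 * π * (y₀ - 1 / 2))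
    have hy2 : (y₀ - 1 / 2) ^ 2 ≤ 1 / 64 := by
      have := abs_le.mp hy₀c
      nlinarith [this.1, this.2]
    have hπ2 : π ^ 2 ≤ 16 := by nlinarith [Real.pi_le_four, hπ]
    have hprod : π ^ 2 * (y₀ - 1 / 2) ^ 2 ≤ 16 * (1 / 64) :=
      mul_le_mul hπ2 hy2 (sq_nonneg _) (by norm_num)
    have h2 : 1 / 2 ≤ Real.cos (2 * π * (y₀ - 1 / 2)) := by
      nlinarith [h1, hprod]
    exact h2.trans (le_abs_self _)
  -- denominator lower bound
  have habsA : |2 * π * v₂ x₀ * Real.cos (2 * π * y₀)|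
      = 2 * π * |v₂ x₀| * |Real.cos (2 * π * y₀)| := by
    rw [abs_mul, abs_mul, abs_of_pos (by positivity : (0:ℝ) < 2 * π)]
  have hm : 3 / 4 * s * (1 / 2) ≤ |v₂ x₀| * |Real.cos (2 * π * y₀)| :=
    mul_le_mul hv2 hcos (by norm_num) (abs_nonneg _)
  have h2s : 2 * s ≤ |2 * π * v₂ x₀ * Real.cos (2 * π * y₀)| := by
    rw [habsA]
    nlinarith [hm, Real.pi_gt_three, hsp.le,
      mul_nonneg (abs_nonneg (v₂ x₀)) (abs_nonneg (Real.cos (2 * π * y₀)))]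
  have htri : |2 * π * v₂ x₀ * Real.cos (2 * π * y₀)|
      ≤ |2 * π * v₂ x₀ * Real.cos (2 * π * y₀) + By x₀ y₀| + |By x₀ y₀| := by
    have h := abs_add_le (2 * π * v₂ x₀ * Real.cos (2 * π * y₀) + By x₀ y₀) (-(By x₀ y₀))
    simpa using h
  have hden : s ≤ |2 * π * v₂ x₀ * Real.cos (2 * π * y₀) + By x₀ y₀| := by
    linarith
  have hdenp : 0 < |2 * π * v₂ x₀ * Real.cos (2 * π * y₀) + By x₀ y₀| :=
    lt_of_lt_of_le hsp hden
  refine ⟨by simpa using hsp, by simpa using hden, ?_⟩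
  -- bound on |sin (2πy₀)| from the zero condition
  set t := |Real.sin (2 * π * y₀)| with ht_def
  have ht0 : 0 ≤ t := abs_nonneg _
  have hsy : 3 / 4 * s * t ≤ K * η / N := by
    have h1 : v₂ x₀ * Real.sin (2 * π * y₀) = -(B x₀ y₀) := by linarith
    have h2 : |v₂ x₀| * t = |B x₀ y₀| := by
      rw [ht_def, ← abs_mul, h1, abs_neg]
    have h3 : 3 / 4 * s * t ≤ |v₂ x₀| * t := mul_le_mul_of_nonneg_right hv2 ht0
    linarith
  -- numerator bound
  have hv2'c := hv2'bd x₀ hx₀m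
  have hnum : |v₂' x₀ * Real.sin (2 * π * y₀) + Bx x₀ y₀| ≤ K / N * t + K * η / N := by
    calc |v₂' x₀ * Real.sin (2 * π * y₀) + Bx x₀ y₀|
        ≤ |v₂' x₀ * Real.sin (2 * π * y₀)| + |Bx x₀ y₀| := abs_add_le _ _
      _ = |v₂' x₀| * t + |Bx x₀ y₀| := by rw [abs_mul, ht_def]
      _ ≤ K / N * t + K * η / N :=
          add_le_add (mul_le_mul_of_nonneg_right hv2'c ht0) hB2
  -- conclude
  rw [show Real.sin (2 * π * x₀ / N) ^ 2 = s ^ 2 by rw [hs_def, sq_abs]]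
  have hnum0 : 0 ≤ |v₂' x₀ * Real.sin (2 * π * y₀) + Bx x₀ y₀| := abs_nonneg _
  have hsy' : 3 / 4 * s * t * N ≤ K * η := (le_div_iff₀ hN0).mp hsy
  have step1 : |v₂' x₀ * Real.sin (2 * π * y₀) + Bx x₀ y₀|
        / |2 * π * v₂ x₀ * Real.cos (2 * π * y₀) + By x₀ y₀|
      ≤ (K / N * t + K * η / N) / s :=
    div_le_div₀ (by positivity) hnum hsp hden
  have e1 : (K / N * t + K * η / N) / s = K * t / (N * s) + K * η / (N * s) := by
    field_simp
    try ring
  have step2 : K * t / (N * s) ≤ 2 * K ^ 2 * η / (N ^ 2 * s ^ 2) := by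
    rw [div_le_div_iff₀ (by positivity) (by positivity)]
    nlinarith [mul_le_mul_of_nonneg_left hsy' (by positivity : (0:ℝ) ≤ K * (N * s)),
      mul_nonneg (mul_nonneg (mul_nonneg hK0.le hK0.le) hη.le)
        (mul_pos hN0 hsp).le]
  have step3 : K * η / (N * s) ≤ 2 * K ^ 2 * η / (N * s) := by
    apply div_le_div_of_nonneg_right ?_ (by positivity)
    nlinarith [mul_nonneg (by linarith : (0:ℝ) ≤ 2 * K - 1) (mul_pos hK0 hη).le]
  linarith [step1, e1 ▸ step1, step2, step3]
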